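/- Let F : A → B be a functor with F(0) = 0 and let d ≥ 1. The following are equivalent: (1) the (d+1)-st cross effect F_{d+1} vanishes; (2) d = 1 and F is additive, or d > 1 and there exists a functor G : A × A → B of degree ≤ d−1 in each argument together with a natural decomposition F(X ⊕ Y) ≅ F(X) ⊕ F(Y) ⊕ G(X,Y). -/

import Mathlib

open CategoryTheory CategoryTheory.Limits ZeroObject
attribute [local instance] CategoryTheory.Abelian.hasFiniteBiproducts

variable {A B : Type*} [Category A] [Category B] [Abelian A] [Abelian B]

/-- The idempotent `crₙ = Σ_{S ⊆ {1,…,n}} (−1)^{n−|S|} F(e_S)` on `F(X₁ ⊕ ⋯ ⊕ Xₙ)`. -/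
noncomputable def crIdem (F : A ⥤ B) {n : ℕ} (X : Fin n → A) :
    F.obj (⨁ X) ⟶ F.obj (⨁ X) :=
  ∑ S : Finset (Fin n), ((-1 : ℤ) ^ (n - S.card)) •
    F.map (∑ i ∈ S, biproduct.π X i ≫ biproduct.ι X i)

/-- The `n`-th cross effect `Fₙ(X₁,…,Xₙ)`: the image of `crₙ` in `F(X₁ ⊕ ⋯ ⊕ Xₙ)`. -/
noncomputable def crossEffect (F : A ⥤ B) {n : ℕ} (X : Fin n → A) : B :=
  image (crIdem F X)

/-- `F` has degree `≤ d` (for `d ≥ 1`), defined recursively: degree `≤ 1` means additive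
(the canonical map `F(X) ⊕ F(Y) → F(X ⊕ Y)` is an isomorphism); degree `≤ d` means that
there is a bifunctor `G` of degree `≤ d − 1` in each argument together with a natural
decomposition `F(X ⊕ Y) ≅ F(X) ⊕ F(Y) ⊕ G(X,Y)`.  (Degree `≤ 0` means `F = 0`.) -/
def FunctorDegLE : ℕ → (A ⥤ B) → Prop
  | 0, F => ∀ X : A, IsZero (F.obj X)
  | 1, F => ∀ X Y : A,
      IsIso (biprod.desc (F.map (biprod.inl : X ⟶ X ⊞ Y)) (F.map (biprod.inr : Y ⟶ X ⊞ Y)))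
  | (d+2), F => ∃ G : A × A ⥤ B,
      (∃ iso : ∀ X Y : A, F.obj (X ⊞ Y) ≅ F.obj X ⊞ (F.obj Y ⊞ G.obj (X, Y)),
        ∀ (X X' Y Y' : A) (f : X ⟶ X') (g : Y ⟶ Y'),
          (iso X Y).hom ≫ biprod.map (F.map f) (biprod.map (F.map g)
              (G.map ((f, g) : (X, Y) ⟶ (X', Y'))))
            = F.map (biprod.map f g) ≫ (iso X' Y').hom) ∧
      (∀ X : A, FunctorDegLE (d+1) ((Functor.curry.obj G).obj X)) ∧
      (∀ Y : A, FunctorDegLE (d+1) ((Functor.curry.obj (CategoryTheory.Prod.swap A A ⋙ G)).obj Y))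


namespace CrossFx

/-- reduced functors kill zero morphisms -/
lemma map_zero' (F : A ⥤ B) (hF : IsZero (F.obj (0 : A))) (X Y : A) :
    F.map (0 : X ⟶ Y) = 0 := by
  have h : (0 : X ⟶ Y) = (0 : X ⟶ (0:A)) ≫ (0 : (0:A) ⟶ Y) := by simp
  rw [h, F.map_comp, hF.eq_zero_of_src (F.map (0 : (0:A) ⟶ Y)), comp_zero]

lemma isZero_crossEffect_iff (F : A ⥤ B) {n : ℕ} (X : Fin n → A) :
    IsZero (crossEffect F X) ↔ crIdem F X = 0 := by
  constructor
  · intro h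
    have h' : IsZero (image (crIdem F X)) := h
    rw [← image.fac (crIdem F X), h'.eq_zero_of_tgt (factorThruImage (crIdem F X)), zero_comp]
  · intro h
    have h2 : IsZero (image (crIdem F X)) := by
      rw [h]
      rw [IsZero.iff_id_eq_zero, ← cancel_mono (image.ι (0 : F.obj (⨁ X) ⟶ F.obj (⨁ X))),
        image.ι_zero, Category.id_comp, comp_zero]
    exact h2

section Idem
variable {T : B} {e : T ⟶ T} (he : e ≫ e = e)
include he

lemma ι_comp_idem : image.ι e ≫ e = image.ι e := by
  have h : factorThruImage e ≫ image.ι e ≫ e = factorThruImage e ≫ image.ι e := by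
    rw [← Category.assoc, image.fac, he]
  exact (cancel_epi (factorThruImage e)).1 h

lemma ι_comp_factor : image.ι e ≫ factorThruImage e = 𝟙 _ := by
  rw [← cancel_mono (image.ι e), Category.assoc, image.fac, Category.id_comp, ι_comp_idem he]

lemma idem_comp_factor : e ≫ factorThruImage e = factorThruImage e := by
  rw [← cancel_mono (image.ι e), Category.assoc, image.fac, he]

end Idem

lemma isZero_image_zero {T T' : B} : IsZero (image (0 : T ⟶ T')) := by
  rw [IsZero.iff_id_eq_zero, ← cancel_mono (image.ι (0 : T ⟶ T')), image.ι_zero,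
    Category.id_comp, comp_zero]


noncomputable abbrev pp (X Y : A) : X ⊞ Y ⟶ X ⊞ Y := biprod.fst ≫ biprod.inl
noncomputable abbrev qq (X Y : A) : X ⊞ Y ⟶ X ⊞ Y := biprod.snd ≫ biprod.inr

lemma pp_add_qq (X Y : A) : pp X Y + qq X Y = 𝟙 (X ⊞ Y) := biprod.total

lemma map_eq_pq {X Y X' Y' : A} (f : X ⟶ X') (g : Y ⟶ Y') :
    biprod.map f g = biprod.fst ≫ f ≫ biprod.inl + biprod.snd ≫ g ≫ biprod.inr := by
  apply biprod.hom_ext <;> simp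

noncomputable def c2 (F : A ⥤ B) (X Y : A) : F.obj (X ⊞ Y) ⟶ F.obj (X ⊞ Y) :=
  𝟙 _ - F.map (pp X Y) - F.map (qq X Y)

variable (F : A ⥤ B)

lemma c2_natural {X Y X' Y' : A} (f : X ⟶ X') (g : Y ⟶ Y') :
    c2 F X Y ≫ F.map (biprod.map f g) = F.map (biprod.map f g) ≫ c2 F X' Y' := by
  have h1 : pp X Y ≫ biprod.map f g = biprod.map f g ≫ pp X' Y' := by simp
  have h2 : qq X Y ≫ biprod.map f g = biprod.map f g ≫ qq X' Y' := by simp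
  simp only [c2, Preadditive.sub_comp, Preadditive.comp_sub, Category.id_comp,
    Category.comp_id, ← F.map_comp, h1, h2]

variable (hF : IsZero (F.obj (0 : A)))
include hF

lemma map_zero'' (X Y : A) : F.map (0 : X ⟶ Y) = 0 := by
  have h : (0 : X ⟶ Y) = (0 : X ⟶ (0:A)) ≫ (0 : (0:A) ⟶ Y) := by simp
  rw [h, F.map_comp, hF.eq_zero_of_src (F.map (0 : (0:A) ⟶ Y)), comp_zero]

lemma c2_idem (X Y : A) : c2 F X Y ≫ c2 F X Y = c2 F X Y := by
  have hpq : pp X Y ≫ qq X Y = 0 := by simp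
  have hqp : qq X Y ≫ pp X Y = 0 := by simp
  have hpp : pp X Y ≫ pp X Y = pp X Y := by simp
  have hqq : qq X Y ≫ qq X Y = qq X Y := by simp
  simp only [c2, Preadditive.sub_comp, Preadditive.comp_sub, Category.id_comp,
    Category.comp_id, ← F.map_comp, hpq, hqp, hpp, hqq, map_zero'' F hF]
  abel

lemma inl_c2 (X Y : A) : F.map (biprod.inl : X ⟶ X ⊞ Y) ≫ c2 F X Y = 0 := by
  have h1 : (biprod.inl : X ⟶ X ⊞ Y) ≫ pp X Y = biprod.inl := by simp
  have h2 : (biprod.inl : X ⟶ X ⊞ Y) ≫ qq X Y = 0 := by simp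
  simp only [c2, Preadditive.comp_sub, Category.comp_id, ← F.map_comp, h1, h2,
    map_zero'' F hF]
  abel

lemma inr_c2 (X Y : A) : F.map (biprod.inr : Y ⟶ X ⊞ Y) ≫ c2 F X Y = 0 := by
  have h1 : (biprod.inr : Y ⟶ X ⊞ Y) ≫ qq X Y = biprod.inr := by simp
  have h2 : (biprod.inr : Y ⟶ X ⊞ Y) ≫ pp X Y = 0 := by simp
  simp only [c2, Preadditive.comp_sub, Category.comp_id, ← F.map_comp, h1, h2,
    map_zero'' F hF]
  abel

lemma c2_fst (X Y : A) : c2 F X Y ≫ F.map (biprod.fst : X ⊞ Y ⟶ X) = 0 := by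
  have h1 : pp X Y ≫ (biprod.fst : X ⊞ Y ⟶ X) = biprod.fst := by simp
  have h2 : qq X Y ≫ (biprod.fst : X ⊞ Y ⟶ X) = 0 := by simp
  simp only [c2, Preadditive.sub_comp, Category.id_comp, ← F.map_comp, h1, h2,
    map_zero'' F hF]
  abel

lemma c2_snd (X Y : A) : c2 F X Y ≫ F.map (biprod.snd : X ⊞ Y ⟶ Y) = 0 := by
  have h1 : qq X Y ≫ (biprod.snd : X ⊞ Y ⟶ Y) = biprod.snd := by simp
  have h2 : pp X Y ≫ (biprod.snd : X ⊞ Y ⟶ Y) = 0 := by simp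
  simp only [c2, Preadditive.sub_comp, Category.id_comp, ← F.map_comp, h1, h2,
    map_zero'' F hF]
  abel

lemma c2_X0 (X : A) : c2 F X (0 : A) = 0 := by
  have hq : qq X (0 : A) = 0 := by
    rw [qq, (isZero_zero A).eq_zero_of_src (biprod.inr : (0:A) ⟶ X ⊞ 0), comp_zero]
  have hp : pp X (0 : A) = 𝟙 _ := by
    have := pp_add_qq X (0 : A); rw [hq, add_zero] at this; exact this
  rw [c2, hq, hp, F.map_id, map_zero'' F hF]
  abel

lemma c2_0Y (Y : A) : c2 F (0 : A) Y = 0 := by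
  have hp : pp (0 : A) Y = 0 := by
    rw [pp, (isZero_zero A).eq_zero_of_src (biprod.inl : (0:A) ⟶ 0 ⊞ Y), comp_zero]
  have hq : qq (0 : A) Y = 𝟙 _ := by
    have := pp_add_qq (0 : A) Y; rw [hp, zero_add] at this; exact this
  rw [c2, hq, hp, F.map_id, map_zero'' F hF]
  abel


@[reducible]
noncomputable def Gfun : A × A ⥤ B where
  obj P := image (c2 F P.1 P.2)
  map {P P'} fg := image.ι (c2 F P.1 P.2) ≫ F.map (biprod.map fg.1 fg.2) ≫
    factorThruImage (c2 F P'.1 P'.2)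
  map_id P := by
    have h : biprod.map (𝟙 P.1) (𝟙 P.2) = 𝟙 (P.1 ⊞ P.2) := by
      apply biprod.hom_ext <;> simp
    show image.ι (c2 F P.1 P.2) ≫ F.map (biprod.map (𝟙 P.1) (𝟙 P.2)) ≫
      factorThruImage (c2 F P.1 P.2) = 𝟙 _
    rw [h, F.map_id, Category.id_comp, ι_comp_factor (c2_idem F hF P.1 P.2)]
  map_comp {P Q R} fg fg' := by
    have hm : biprod.map (fg.1 ≫ fg'.1) (fg.2 ≫ fg'.2)
        = biprod.map fg.1 fg.2 ≫ biprod.map fg'.1 fg'.2 := by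
      apply biprod.hom_ext <;> simp
    show image.ι _ ≫ F.map (biprod.map (fg.1 ≫ fg'.1) (fg.2 ≫ fg'.2)) ≫ _ = _
    rw [hm, F.map_comp]
    have fac : factorThruImage (c2 F Q.1 Q.2) ≫ image.ι (c2 F Q.1 Q.2) = c2 F Q.1 Q.2 :=
      image.fac _
    slice_rhs 3 4 => rw [fac]
    slice_rhs 3 4 => rw [c2_natural F fg'.1 fg'.2]
    slice_rhs 4 5 => rw [idem_comp_factor (c2_idem F hF R.1 R.2)]
    simp [Category.assoc]

lemma Gfun_map {P P' : A × A} (fg : P ⟶ P') :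
    (Gfun F hF).map fg = image.ι (c2 F P.1 P.2) ≫ F.map (biprod.map fg.1 fg.2) ≫
      factorThruImage (c2 F P'.1 P'.2) := rfl

noncomputable def decompHom (X Y : A) :
    F.obj (X ⊞ Y) ⟶ F.obj X ⊞ (F.obj Y ⊞ (Gfun F hF).obj (X, Y)) :=
  biprod.lift (F.map biprod.fst) (biprod.lift (F.map biprod.snd) (factorThruImage (c2 F X Y)))

noncomputable def decompInv (X Y : A) :
    F.obj X ⊞ (F.obj Y ⊞ (Gfun F hF).obj (X, Y)) ⟶ F.obj (X ⊞ Y) :=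
  biprod.desc (F.map biprod.inl) (biprod.desc (F.map biprod.inr) (image.ι (c2 F X Y)))

lemma decomp_hom_inv (X Y : A) : decompHom F hF X Y ≫ decompInv F hF X Y = 𝟙 _ := by
  rw [decompHom, decompInv, biprod.lift_desc, biprod.lift_desc, image.fac,
    ← F.map_comp, ← F.map_comp]
  rw [show (biprod.fst : X ⊞ Y ⟶ X) ≫ biprod.inl = pp X Y from rfl,
    show (biprod.snd : X ⊞ Y ⟶ Y) ≫ biprod.inr = qq X Y from rfl, c2]
  abel

lemma inl_factor (X Y : A) :
    F.map (biprod.inl : X ⟶ X ⊞ Y) ≫ factorThruImage (c2 F X Y) = 0 := by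
  rw [← cancel_mono (image.ι (c2 F X Y)), Category.assoc, image.fac, inl_c2 F hF, zero_comp]

lemma inr_factor (X Y : A) :
    F.map (biprod.inr : Y ⟶ X ⊞ Y) ≫ factorThruImage (c2 F X Y) = 0 := by
  rw [← cancel_mono (image.ι (c2 F X Y)), Category.assoc, image.fac, inr_c2 F hF, zero_comp]

lemma ι_fst (X Y : A) :
    image.ι (c2 F X Y) ≫ F.map (biprod.fst : X ⊞ Y ⟶ X) = 0 := by
  rw [← ι_comp_idem (c2_idem F hF X Y), Category.assoc, c2_fst F hF, comp_zero]

lemma ι_snd (X Y : A) :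
    image.ι (c2 F X Y) ≫ F.map (biprod.snd : X ⊞ Y ⟶ Y) = 0 := by
  rw [← ι_comp_idem (c2_idem F hF X Y), Category.assoc, c2_snd F hF, comp_zero]

lemma decomp_inv_hom (X Y : A) : decompInv F hF X Y ≫ decompHom F hF X Y = 𝟙 _ := by
  apply biprod.hom_ext' <;> [skip; apply biprod.hom_ext'] <;>
  · apply biprod.hom_ext <;> [skip; apply biprod.hom_ext] <;>
    simp [Gfun, decompHom, decompInv, inl_factor F hF, inr_factor F hF, ι_fst F hF,
      ι_snd F hF, ι_comp_factor (c2_idem F hF X Y), map_zero'' F hF, ← F.map_comp]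

noncomputable def decompIso (X Y : A) :
    F.obj (X ⊞ Y) ≅ F.obj X ⊞ (F.obj Y ⊞ (Gfun F hF).obj (X, Y)) where
  hom := decompHom F hF X Y
  inv := decompInv F hF X Y
  hom_inv_id := decomp_hom_inv F hF X Y
  inv_hom_id := decomp_inv_hom F hF X Y

lemma decomp_natural {X X' Y Y' : A} (f : X ⟶ X') (g : Y ⟶ Y') :
    decompHom F hF X Y ≫ biprod.map (F.map f) (biprod.map (F.map g)
        ((Gfun F hF).map ((f, g) : (X, Y) ⟶ (X', Y'))))
      = F.map (biprod.map f g) ≫ decompHom F hF X' Y' := by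
  apply biprod.hom_ext
  · simp only [Category.assoc, biprod.map_fst, decompHom, biprod.lift_fst,
      biprod.lift_fst_assoc]
    rw [← F.map_comp, ← F.map_comp, biprod.map_fst]
  · apply biprod.hom_ext
    · simp only [Category.assoc, biprod.map_snd, biprod.lift_snd_assoc, biprod.map_fst,
        biprod.lift_fst, decompHom, biprod.lift_fst_assoc, biprod.lift_snd]
      rw [← F.map_comp, ← F.map_comp, biprod.map_snd]
    · simp only [decompHom, Category.assoc, biprod.map_snd, biprod.lift_snd_assoc,
        biprod.map_snd, biprod.lift_snd, Gfun_map]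
      slice_lhs 1 2 => rw [image.fac]
      slice_lhs 1 2 => rw [c2_natural F f g]
      slice_lhs 2 3 => rw [idem_comp_factor (c2_idem F hF X' Y')]

end CrossFx

namespace CrossFx

lemma sum_powerset_map {α β M : Type*} [DecidableEq β] [AddCommMonoid M]
    (f : α ↪ β) (s : Finset α) (g : Finset β → M) :
    ∑ t ∈ (s.map f).powerset, g t = ∑ r ∈ s.powerset, g (r.map f) := by
  have hps : (s.map f).powerset = s.powerset.image (Finset.map f) := by
    ext t
    simp only [Finset.mem_powerset, Finset.mem_image, Finset.subset_map_iff]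
    constructor
    · rintro ⟨u, hu, rfl⟩; exact ⟨u, hu, rfl⟩
    · rintro ⟨u, hu, rfl⟩; exact ⟨u, hu, rfl⟩
  rw [hps, Finset.sum_image]
  intro x _ y _ h
  exact Finset.map_injective f h

noncomputable def eS {n : ℕ} (X : Fin n → A) (S : Finset (Fin n)) : (⨁ X) ⟶ (⨁ X) :=
  ∑ i ∈ S, biproduct.π X i ≫ biproduct.ι X i

lemma crIdem_eq (F : A ⥤ B) {n : ℕ} (X : Fin n → A) :
    crIdem F X = ∑ S : Finset (Fin n), ((-1 : ℤ) ^ (n - S.card)) • F.map (eS X S) := rfl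

section Snoc
variable {n : ℕ} (X' : Fin (n+1) → A)

noncomputable def sHom : (⨁ X') ⟶ (⨁ (X' ∘ Fin.castSucc)) ⊞ X' (Fin.last n) :=
  biprod.lift (biproduct.lift fun i => biproduct.π X' i.castSucc)
    (biproduct.π X' (Fin.last n))

noncomputable def sInv : (⨁ (X' ∘ Fin.castSucc)) ⊞ X' (Fin.last n) ⟶ (⨁ X') :=
  biprod.desc (biproduct.desc fun i => biproduct.ι X' i.castSucc)
    (biproduct.ι X' (Fin.last n))

lemma s_hom_inv : sHom X' ≫ sInv X' = 𝟙 _ := by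
  rw [sHom, sInv, biprod.lift_desc, biproduct.lift_desc, ← biproduct.total,
    Fin.sum_univ_castSucc]

lemma s_m1 (i : Fin n) :
    sInv X' ≫ biproduct.π X' i.castSucc = biprod.fst ≫ biproduct.π (X' ∘ Fin.castSucc) i := by
  apply biprod.hom_ext'
  · apply biproduct.hom_ext'
    intro j
    simp only [sInv, biprod.inl_desc_assoc, biproduct.ι_desc_assoc, biprod.inl_fst_assoc]
    by_cases h : j = i
    · subst h; simp
    · rw [biproduct.ι_π_ne _ (by simpa using h), biproduct.ι_π_ne _ h]
  · simp [sInv, biproduct.ι_π_ne _ (Fin.castSucc_lt_last i).ne']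

lemma s_m2 (i : Fin n) :
    biproduct.ι X' i.castSucc ≫ sHom X' = biproduct.ι (X' ∘ Fin.castSucc) i ≫ biprod.inl := by
  apply biprod.hom_ext
  · apply biproduct.hom_ext
    intro j
    simp only [sHom, Category.assoc, biprod.lift_fst, biproduct.lift_π, biprod.inl_fst]
    by_cases h : i = j
    · subst h; simp
    · rw [biproduct.ι_π_ne _ (by simpa using h)]
      simp [biproduct.ι_π_ne _ h]
  · simp [sHom, biproduct.ι_π_ne _ (Fin.castSucc_lt_last i).ne]

lemma s_m3 : sInv X' ≫ biproduct.π X' (Fin.last n) = biprod.snd := by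
  apply biprod.hom_ext'
  · apply biproduct.hom_ext'
    intro j
    simp [sInv, biproduct.ι_π_ne _ (Fin.castSucc_lt_last j).ne]
  · simp [sInv]

lemma s_m4 : biproduct.ι X' (Fin.last n) ≫ sHom X' = biprod.inr := by
  apply biprod.hom_ext
  · apply biproduct.hom_ext
    intro j
    simp [sHom, biproduct.ι_π_ne _ (Fin.castSucc_lt_last j).ne']
  · simp [sHom]

lemma s_inv_hom : sInv X' ≫ sHom X' = 𝟙 _ := by
  apply biprod.hom_ext'
  · rw [← Category.assoc, Category.comp_id]
    apply biproduct.hom_ext'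
    intro j
    rw [← Category.assoc, sInv, biprod.inl_desc, biproduct.ι_desc, s_m2]
  · rw [← Category.assoc, Category.comp_id, sInv, biprod.inr_desc, s_m4]

lemma sConj_single (i : Fin n) :
    sInv X' ≫ (biproduct.π X' i.castSucc ≫ biproduct.ι X' i.castSucc) ≫ sHom X'
      = biprod.fst ≫ (biproduct.π (X' ∘ Fin.castSucc) i ≫ biproduct.ι (X' ∘ Fin.castSucc) i)
          ≫ biprod.inl := by
  rw [← Category.assoc, ← Category.assoc, s_m1, Category.assoc, Category.assoc, s_m2]
  simp only [Category.assoc]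

lemma sConj_last :
    sInv X' ≫ (biproduct.π X' (Fin.last n) ≫ biproduct.ι X' (Fin.last n)) ≫ sHom X'
      = qq _ _ := by
  rw [← Category.assoc, ← Category.assoc, s_m3, Category.assoc, s_m4]

lemma sConj_eS (R : Finset (Fin n)) :
    sInv X' ≫ eS X' (R.map Fin.castSuccEmb) ≫ sHom X'
      = biprod.map (eS (X' ∘ Fin.castSucc) R) (0 : X' (Fin.last n) ⟶ _) := by
  rw [map_eq_pq, eS, Finset.sum_map, Preadditive.sum_comp, Preadditive.comp_sum]
  rw [show (biprod.snd ≫ (0 : X' (Fin.last n) ⟶ _) ≫ biprod.inr) = 0 by simp, add_zero,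
    eS, Preadditive.sum_comp, Preadditive.comp_sum]
  apply Finset.sum_congr rfl
  intro i _
  simpa using sConj_single X' i

lemma not_mem_map_castSucc (R : Finset (Fin n)) :
    Fin.last n ∉ R.map Fin.castSuccEmb := by
  intro h
  rcases Finset.mem_map.1 h with ⟨x, -, hx⟩
  exact (Fin.castSucc_lt_last x).ne (by simpa using hx)

lemma sConj_eS_insert (R : Finset (Fin n)) :
    sInv X' ≫ eS X' (insert (Fin.last n) (R.map Fin.castSuccEmb)) ≫ sHom X'
      = biprod.map (eS (X' ∘ Fin.castSucc) R) (𝟙 _) := by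
  rw [eS, Finset.sum_insert (not_mem_map_castSucc R)]
  rw [Preadditive.add_comp, Preadditive.comp_add, sConj_last]
  have h2 := sConj_eS X' R
  rw [eS] at h2
  rw [h2]
  rw [map_eq_pq, map_eq_pq]
  simp only [Category.id_comp, comp_zero, zero_comp, add_zero]
  abel

end Snoc


lemma conj_helper {C : Type*} [Category C] {P Q : C} (u : P ⟶ Q) (v : Q ⟶ P)
    (huv : u ≫ v = 𝟙 _) (e : P ⟶ P) : e = u ≫ (v ≫ e ≫ u) ≫ v := by
  have h : u ≫ (v ≫ e ≫ u) ≫ v = (u ≫ v) ≫ e ≫ (u ≫ v) := by simp only [Category.assoc]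
  rw [h, huv, Category.id_comp, Category.comp_id]

section SnocMain
variable (F : A ⥤ B) {n : ℕ} (X' : Fin (n+1) → A)

noncomputable def sB : F.obj ((⨁ (X' ∘ Fin.castSucc)) ⊞ X' (Fin.last n)) ⟶
    F.obj ((⨁ (X' ∘ Fin.castSucc)) ⊞ X' (Fin.last n)) :=
  ∑ R : Finset (Fin n), ((-1 : ℤ) ^ (n - R.card)) •
    (F.map (biprod.map (eS (X' ∘ Fin.castSucc) R) (𝟙 (X' (Fin.last n))))
      - F.map (biprod.map (eS (X' ∘ Fin.castSucc) R) (0 : X' (Fin.last n) ⟶ X' (Fin.last n))))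

lemma crIdem_snoc : crIdem F X' = F.map (sHom X') ≫ sB F X' ≫ F.map (sInv X') := by
  rw [crIdem_eq]
  have step1 : ∀ S : Finset (Fin (n+1)),
      ((-1 : ℤ) ^ ((n+1) - S.card)) • F.map (eS X' S)
        = F.map (sHom X') ≫ (((-1 : ℤ) ^ ((n+1) - S.card)) •
            F.map (sInv X' ≫ eS X' S ≫ sHom X')) ≫ F.map (sInv X') := by
    intro S
    rw [Preadditive.zsmul_comp, Preadditive.comp_zsmul]
    congr 1
    rw [← F.map_comp, ← F.map_comp]
    congr 1
    exact conj_helper (sHom X') (sInv X') (s_hom_inv X') (eS X' S)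
  rw [Finset.sum_congr rfl (fun S _ => step1 S), ← Preadditive.comp_sum,
    ← Preadditive.sum_comp]
  congr 2
  rw [sB, ← Finset.powerset_univ, Fin.univ_castSuccEmb, Finset.cons_eq_insert,
    Finset.sum_powerset_insert (not_mem_map_castSucc Finset.univ),
    sum_powerset_map, sum_powerset_map, Finset.powerset_univ, ← Finset.sum_add_distrib]
  apply Finset.sum_congr rfl
  intro R _
  have hc : R.card ≤ n := by
    simpa using Finset.card_le_card (Finset.subset_univ R)
  have hcard1 : (R.map Fin.castSuccEmb).card = R.card := Finset.card_map _
  have hcard2 : (insert (Fin.last n) (R.map Fin.castSuccEmb)).card = R.card + 1 := by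
    rw [Finset.card_insert_of_notMem (not_mem_map_castSucc R), hcard1]
  rw [hcard1, hcard2, sConj_eS, sConj_eS_insert]
  have hexp1 : (n + 1) - R.card = (n - R.card) + 1 := by omega
  have hexp2 : (n + 1) - (R.card + 1) = n - R.card := by omega
  rw [hexp1, hexp2, pow_succ, mul_neg_one, neg_smul, smul_sub]
  abel

lemma sB_eq : sB F X' = F.map (sInv X') ≫ crIdem F X' ≫ F.map (sHom X') := by
  rw [crIdem_snoc]
  have h : F.map (sInv X') ≫ (F.map (sHom X') ≫ sB F X' ≫ F.map (sInv X')) ≫ F.map (sHom X')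
      = (F.map (sInv X') ≫ F.map (sHom X')) ≫ sB F X' ≫
          (F.map (sInv X') ≫ F.map (sHom X')) := by
    simp only [Category.assoc]
  rw [h, ← F.map_comp, s_inv_hom, F.map_id, Category.id_comp, Category.comp_id]

end SnocMain


section Cons
variable {n : ℕ} (X' : Fin (n+1) → A)

noncomputable def cHom : (⨁ X') ⟶ X' 0 ⊞ (⨁ (X' ∘ Fin.succ)) :=
  biprod.lift (biproduct.π X' 0) (biproduct.lift fun i => biproduct.π X' i.succ)

noncomputable def cInv : X' 0 ⊞ (⨁ (X' ∘ Fin.succ)) ⟶ (⨁ X') :=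
  biprod.desc (biproduct.ι X' 0) (biproduct.desc fun i => biproduct.ι X' i.succ)

lemma c_hom_inv : cHom X' ≫ cInv X' = 𝟙 _ := by
  rw [cHom, cInv, biprod.lift_desc, biproduct.lift_desc, ← biproduct.total,
    Fin.sum_univ_succ]

lemma c_m1 (i : Fin n) :
    cInv X' ≫ biproduct.π X' i.succ = biprod.snd ≫ biproduct.π (X' ∘ Fin.succ) i := by
  apply biprod.hom_ext'
  · simp [cInv, biproduct.ι_π_ne _ (Fin.succ_ne_zero i).symm]
  · apply biproduct.hom_ext'
    intro j
    simp only [cInv, biprod.inr_desc_assoc, biproduct.ι_desc_assoc, biprod.inr_snd_assoc]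
    by_cases h : j = i
    · subst h; simp
    · rw [biproduct.ι_π_ne _ (by simpa [Fin.succ_inj] using h), biproduct.ι_π_ne _ h]

lemma c_m2 (i : Fin n) :
    biproduct.ι X' i.succ ≫ cHom X' = biproduct.ι (X' ∘ Fin.succ) i ≫ biprod.inr := by
  apply biprod.hom_ext
  · simp [cHom, biproduct.ι_π_ne _ (Fin.succ_ne_zero i)]
  · apply biproduct.hom_ext
    intro j
    simp only [cHom, Category.assoc, biprod.lift_snd, biproduct.lift_π, biprod.inr_snd]
    by_cases h : i = j
    · subst h; simp
    · rw [biproduct.ι_π_ne _ (by simpa [Fin.succ_inj] using h)]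
      simp [biproduct.ι_π_ne _ h]

lemma c_m3 : cInv X' ≫ biproduct.π X' 0 = biprod.fst := by
  apply biprod.hom_ext'
  · simp [cInv]
  · apply biproduct.hom_ext'
    intro j
    simp [cInv, biproduct.ι_π_ne _ (Fin.succ_ne_zero j)]

lemma c_m4 : biproduct.ι X' 0 ≫ cHom X' = biprod.inl := by
  apply biprod.hom_ext
  · simp [cHom]
  · apply biproduct.hom_ext
    intro j
    simp [cHom, biproduct.ι_π_ne _ (Fin.succ_ne_zero j).symm]

lemma c_inv_hom : cInv X' ≫ cHom X' = 𝟙 _ := by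
  apply biprod.hom_ext'
  · rw [← Category.assoc, Category.comp_id, cInv, biprod.inl_desc, c_m4]
  · rw [← Category.assoc, Category.comp_id]
    apply biproduct.hom_ext'
    intro j
    rw [← Category.assoc, cInv, biprod.inr_desc, biproduct.ι_desc, c_m2]

lemma cConj_single (i : Fin n) :
    cInv X' ≫ (biproduct.π X' i.succ ≫ biproduct.ι X' i.succ) ≫ cHom X'
      = biprod.snd ≫ (biproduct.π (X' ∘ Fin.succ) i ≫ biproduct.ι (X' ∘ Fin.succ) i)
          ≫ biprod.inr := by
  rw [← Category.assoc, ← Category.assoc, c_m1, Category.assoc, Category.assoc, c_m2]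
  simp only [Category.assoc]

lemma cConj_zero :
    cInv X' ≫ (biproduct.π X' 0 ≫ biproduct.ι X' 0) ≫ cHom X' = pp _ _ := by
  rw [← Category.assoc, ← Category.assoc, c_m3, Category.assoc, c_m4]

lemma cConj_eS (R : Finset (Fin n)) :
    cInv X' ≫ eS X' (R.map (Fin.succEmb n)) ≫ cHom X'
      = biprod.map (0 : X' 0 ⟶ X' 0) (eS (X' ∘ Fin.succ) R) := by
  rw [map_eq_pq, eS, Finset.sum_map, Preadditive.sum_comp, Preadditive.comp_sum]
  rw [show (biprod.fst ≫ (0 : X' 0 ⟶ X' 0) ≫ biprod.inl) = 0 by simp, zero_add,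
    eS, Preadditive.sum_comp, Preadditive.comp_sum]
  apply Finset.sum_congr rfl
  intro i _
  simpa using cConj_single X' i

lemma not_mem_map_succ (R : Finset (Fin n)) : (0 : Fin (n+1)) ∉ R.map (Fin.succEmb n) := by
  intro h
  rcases Finset.mem_map.1 h with ⟨x, -, hx⟩
  exact Fin.succ_ne_zero x hx

lemma cConj_eS_insert (R : Finset (Fin n)) :
    cInv X' ≫ eS X' (insert (0 : Fin (n+1)) (R.map (Fin.succEmb n))) ≫ cHom X'
      = biprod.map (𝟙 (X' 0)) (eS (X' ∘ Fin.succ) R) := by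
  rw [eS, Finset.sum_insert (not_mem_map_succ R)]
  rw [Preadditive.add_comp, Preadditive.comp_add, cConj_zero]
  have h2 := cConj_eS X' R
  rw [eS] at h2
  rw [h2]
  rw [map_eq_pq, map_eq_pq]
  simp only [Category.id_comp, comp_zero, zero_comp, add_zero, zero_add]

end Cons

section ConsMain
variable (F : A ⥤ B) {n : ℕ} (X' : Fin (n+1) → A)

noncomputable def cB : F.obj (X' 0 ⊞ (⨁ (X' ∘ Fin.succ))) ⟶
    F.obj (X' 0 ⊞ (⨁ (X' ∘ Fin.succ))) :=
  ∑ R : Finset (Fin n), ((-1 : ℤ) ^ (n - R.card)) •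
    (F.map (biprod.map (𝟙 (X' 0)) (eS (X' ∘ Fin.succ) R))
      - F.map (biprod.map (0 : X' 0 ⟶ X' 0) (eS (X' ∘ Fin.succ) R)))

lemma crIdem_cons : crIdem F X' = F.map (cHom X') ≫ cB F X' ≫ F.map (cInv X') := by
  rw [crIdem_eq]
  have step1 : ∀ S : Finset (Fin (n+1)),
      ((-1 : ℤ) ^ ((n+1) - S.card)) • F.map (eS X' S)
        = F.map (cHom X') ≫ (((-1 : ℤ) ^ ((n+1) - S.card)) •
            F.map (cInv X' ≫ eS X' S ≫ cHom X')) ≫ F.map (cInv X') := by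
    intro S
    rw [Preadditive.zsmul_comp, Preadditive.comp_zsmul]
    congr 1
    rw [← F.map_comp, ← F.map_comp]
    congr 1
    exact conj_helper (cHom X') (cInv X') (c_hom_inv X') (eS X' S)
  rw [Finset.sum_congr rfl (fun S _ => step1 S), ← Preadditive.comp_sum,
    ← Preadditive.sum_comp]
  congr 2
  rw [cB, ← Finset.powerset_univ, Fin.univ_succ, Finset.cons_eq_insert,
    show (⟨Fin.succ, Fin.succ_injective _⟩ : Fin n ↪ Fin (n+1)) = Fin.succEmb n from rfl,
    Finset.sum_powerset_insert (not_mem_map_succ Finset.univ),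
    sum_powerset_map, sum_powerset_map, Finset.powerset_univ, ← Finset.sum_add_distrib]
  apply Finset.sum_congr rfl
  intro R _
  have hcard1 : (R.map (Fin.succEmb n)).card = R.card := Finset.card_map _
  have hcard2 : (insert (0 : Fin (n+1)) (R.map (Fin.succEmb n))).card = R.card + 1 := by
    rw [Finset.card_insert_of_notMem (not_mem_map_succ R), hcard1]
  rw [hcard1, hcard2, cConj_eS, cConj_eS_insert]
  have hc : R.card ≤ n := by
    simpa using Finset.card_le_card (Finset.subset_univ R)
  have hexp1 : (n + 1) - R.card = (n - R.card) + 1 := by omega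
  have hexp2 : (n + 1) - (R.card + 1) = n - R.card := by omega
  rw [hexp1, hexp2, pow_succ, mul_neg_one, neg_smul, smul_sub]
  abel

lemma cB_eq : cB F X' = F.map (cInv X') ≫ crIdem F X' ≫ F.map (cHom X') := by
  rw [crIdem_cons]
  have h : F.map (cInv X') ≫ (F.map (cHom X') ≫ cB F X' ≫ F.map (cInv X')) ≫ F.map (cHom X')
      = (F.map (cInv X') ≫ F.map (cHom X')) ≫ cB F X' ≫
          (F.map (cInv X') ≫ F.map (cHom X')) := by
    simp only [Category.assoc]
  rw [h, ← F.map_comp, c_inv_hom, F.map_id, Category.id_comp, Category.comp_id]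

end ConsMain


lemma sign_sum_zero (n : ℕ) (hn : 1 ≤ n) :
    (∑ R : Finset (Fin n), ((-1 : ℤ) ^ (n - R.card))) = 0 := by
  have key : ∀ R : Finset (Fin n), ((-1 : ℤ) ^ (n - R.card)) = (-1)^n * (-1)^R.card := by
    intro R
    have hc : R.card ≤ n := by simpa using Finset.card_le_card (Finset.subset_univ R)
    have h2 : n + R.card = (n - R.card) + 2 * R.card := by omega
    have h3 : ((-1 : ℤ))^(n + R.card) = (-1)^(n - R.card) := by
      rw [h2, pow_add, pow_mul]
      norm_num
    rw [← h3, pow_add]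
  rw [Finset.sum_congr rfl (fun R _ => key R), ← Finset.mul_sum]
  haveI : Nonempty (Fin n) := Fin.pos_iff_nonempty.1 (by omega)
  have h0 : (∑ R : Finset (Fin n), ((-1:ℤ))^R.card) = 0 := by
    rw [← Finset.powerset_univ]
    exact Finset.sum_powerset_neg_one_pow_card_of_nonempty Finset.univ_nonempty
  rw [h0, mul_zero]

lemma sandwich_zero {T : B} {e : T ⟶ T} (he : e ≫ e = e) {D : T ⟶ T}
    (hD : e ≫ D ≫ e = 0) : image.ι e ≫ D ≫ factorThruImage e = 0 := by
  rw [← cancel_mono (image.ι e)]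
  simp only [Category.assoc, image.fac, zero_comp]
  rw [← ι_comp_idem he]
  simp only [Category.assoc]
  rw [hD, comp_zero]

section C2Algebra
variable (F : A ⥤ B) (hF : IsZero (F.obj (0 : A)))
include hF

lemma c2_map_id_c2 (U V : A) (e : V ⟶ V) :
    c2 F U V ≫ F.map (biprod.map (𝟙 U) e) ≫ c2 F U V
      = F.map (biprod.map (𝟙 U) e) - F.map (pp U V)
          - F.map (biprod.map (0 : U ⟶ U) e) := by
  have hm_p : biprod.map (𝟙 U) e ≫ pp U V = pp U V := by simp
  have hp_m : pp U V ≫ biprod.map (𝟙 U) e = pp U V := by simp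
  have hm_q : biprod.map (𝟙 U) e ≫ qq U V = biprod.map (0:U⟶U) e := by
    apply biprod.hom_ext' <;> simp
  have hq_m : qq U V ≫ biprod.map (𝟙 U) e = biprod.map (0:U⟶U) e := by
    apply biprod.hom_ext' <;> simp
  have hpq : pp U V ≫ qq U V = 0 := by simp
  have hqp : qq U V ≫ pp U V = 0 := by simp
  have hpp : pp U V ≫ pp U V = pp U V := by simp
  have hqq : qq U V ≫ qq U V = qq U V := by simp
  have hrp : biprod.map (0:U⟶U) e ≫ pp U V = 0 := by
    apply biprod.hom_ext' <;> simp
  have hrq : biprod.map (0:U⟶U) e ≫ qq U V = biprod.map (0:U⟶U) e := by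
    apply biprod.hom_ext' <;> simp
  have hpr : pp U V ≫ biprod.map (0:U⟶U) e = 0 := by
    apply biprod.hom_ext' <;> simp
  have hqr : qq U V ≫ biprod.map (0:U⟶U) e = biprod.map (0:U⟶U) e := by
    apply biprod.hom_ext' <;> simp
  simp only [c2, Preadditive.sub_comp, Preadditive.comp_sub, Category.id_comp,
    Category.comp_id, ← F.map_comp, hm_p, hp_m, hm_q, hq_m, hpq, hqp, hpp, hqq, hrp, hrq,
    hpr, hqr, map_zero'' F hF]
  abel

lemma c2_map_id_c2' (U V : A) (e : U ⟶ U) :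
    c2 F U V ≫ F.map (biprod.map e (𝟙 V)) ≫ c2 F U V
      = F.map (biprod.map e (𝟙 V)) - F.map (qq U V)
          - F.map (biprod.map e (0 : V ⟶ V)) := by
  have hm_q : biprod.map e (𝟙 V) ≫ qq U V = qq U V := by simp
  have hq_m : qq U V ≫ biprod.map e (𝟙 V) = qq U V := by simp
  have hm_p : biprod.map e (𝟙 V) ≫ pp U V = biprod.map e (0:V⟶V) := by
    apply biprod.hom_ext' <;> simp
  have hp_m : pp U V ≫ biprod.map e (𝟙 V) = biprod.map e (0:V⟶V) := by
    apply biprod.hom_ext' <;> simp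
  have hpq : pp U V ≫ qq U V = 0 := by simp
  have hqp : qq U V ≫ pp U V = 0 := by simp
  have hpp : pp U V ≫ pp U V = pp U V := by simp
  have hqq : qq U V ≫ qq U V = qq U V := by simp
  have hrq : biprod.map e (0:V⟶V) ≫ qq U V = 0 := by
    apply biprod.hom_ext' <;> simp
  have hrp : biprod.map e (0:V⟶V) ≫ pp U V = biprod.map e (0:V⟶V) := by
    apply biprod.hom_ext' <;> simp
  have hpr : pp U V ≫ biprod.map e (0:V⟶V) = biprod.map e (0:V⟶V) := by
    apply biprod.hom_ext' <;> simp
  have hqr : qq U V ≫ biprod.map e (0:V⟶V) = 0 := by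
    apply biprod.hom_ext' <;> simp
  simp only [c2, Preadditive.sub_comp, Preadditive.comp_sub, Category.id_comp,
    Category.comp_id, ← F.map_comp, hm_q, hq_m, hm_p, hp_m, hpq, hqp, hpp, hqq, hrq, hrp,
    hpr, hqr, map_zero'' F hF]
  abel

lemma c2_D2_eq_cB {n : ℕ} (X' : Fin (n+1) → A) (hn : 1 ≤ n) :
    c2 F (X' 0) (⨁ (X' ∘ Fin.succ)) ≫
        (∑ R : Finset (Fin n), ((-1:ℤ)^(n - R.card)) •
          F.map (biprod.map (𝟙 (X' 0)) (eS (X' ∘ Fin.succ) R)))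
      ≫ c2 F (X' 0) (⨁ (X' ∘ Fin.succ)) = cB F X' := by
  rw [Preadditive.sum_comp, Preadditive.comp_sum]
  have step : ∀ R : Finset (Fin n),
      c2 F (X' 0) (⨁ (X' ∘ Fin.succ)) ≫
          ((((-1:ℤ)^(n - R.card)) • F.map (biprod.map (𝟙 (X' 0)) (eS (X' ∘ Fin.succ) R)))
            ≫ c2 F (X' 0) (⨁ (X' ∘ Fin.succ)))
        = ((-1:ℤ)^(n - R.card)) •
            (F.map (biprod.map (𝟙 (X' 0)) (eS (X' ∘ Fin.succ) R))
              - F.map (biprod.map (0 : X' 0 ⟶ X' 0) (eS (X' ∘ Fin.succ) R)))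
          - ((-1:ℤ)^(n - R.card)) • F.map (pp (X' 0) (⨁ (X' ∘ Fin.succ))) := by
    intro R
    rw [Preadditive.zsmul_comp, Preadditive.comp_zsmul, c2_map_id_c2 F hF]
    rw [← smul_sub]
    congr 1
    abel
  rw [Finset.sum_congr rfl (fun R _ => step R), Finset.sum_sub_distrib, ← Finset.sum_smul,
    sign_sum_zero n hn, zero_smul, sub_zero, cB]

lemma c2_D1_eq_sB {n : ℕ} (X' : Fin (n+1) → A) (hn : 1 ≤ n) :
    c2 F (⨁ (X' ∘ Fin.castSucc)) (X' (Fin.last n)) ≫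
        (∑ R : Finset (Fin n), ((-1:ℤ)^(n - R.card)) •
          F.map (biprod.map (eS (X' ∘ Fin.castSucc) R) (𝟙 (X' (Fin.last n)))))
      ≫ c2 F (⨁ (X' ∘ Fin.castSucc)) (X' (Fin.last n)) = sB F X' := by
  rw [Preadditive.sum_comp, Preadditive.comp_sum]
  have step : ∀ R : Finset (Fin n),
      c2 F (⨁ (X' ∘ Fin.castSucc)) (X' (Fin.last n)) ≫
          ((((-1:ℤ)^(n - R.card)) •
            F.map (biprod.map (eS (X' ∘ Fin.castSucc) R) (𝟙 (X' (Fin.last n)))))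
            ≫ c2 F (⨁ (X' ∘ Fin.castSucc)) (X' (Fin.last n)))
        = ((-1:ℤ)^(n - R.card)) •
            (F.map (biprod.map (eS (X' ∘ Fin.castSucc) R) (𝟙 (X' (Fin.last n))))
              - F.map (biprod.map (eS (X' ∘ Fin.castSucc) R) (0 : X' (Fin.last n) ⟶ _)))
          - ((-1:ℤ)^(n - R.card)) •
              F.map (qq (⨁ (X' ∘ Fin.castSucc)) (X' (Fin.last n))) := by
    intro R
    rw [Preadditive.zsmul_comp, Preadditive.comp_zsmul, c2_map_id_c2' F hF]
    rw [← smul_sub]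
    congr 1
    abel
  rw [Finset.sum_congr rfl (fun R _ => step R), Finset.sum_sub_distrib, ← Finset.sum_smul,
    sign_sum_zero n hn, zero_smul, sub_zero, sB]

lemma crIdem_curryG (U : A) {n : ℕ} (Z : Fin n → A) :
    crIdem ((Functor.curry.obj (Gfun F hF)).obj U) Z
      = image.ι (c2 F U (⨁ Z)) ≫
          (∑ R : Finset (Fin n), ((-1:ℤ)^(n - R.card)) •
            F.map (biprod.map (𝟙 U) (eS Z R)))
        ≫ factorThruImage (c2 F U (⨁ Z)) := by
  rw [crIdem_eq, Preadditive.sum_comp, Preadditive.comp_sum]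
  apply Finset.sum_congr rfl
  intro R _
  rw [Preadditive.zsmul_comp, Preadditive.comp_zsmul]
  congr 1

lemma crIdem_curryGswap (V : A) {n : ℕ} (Z : Fin n → A) :
    crIdem ((Functor.curry.obj (CategoryTheory.Prod.swap A A ⋙ Gfun F hF)).obj V) Z
      = image.ι (c2 F (⨁ Z) V) ≫
          (∑ R : Finset (Fin n), ((-1:ℤ)^(n - R.card)) •
            F.map (biprod.map (eS Z R) (𝟙 V)))
        ≫ factorThruImage (c2 F (⨁ Z) V) := by
  rw [crIdem_eq, Preadditive.sum_comp, Preadditive.comp_sum]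
  apply Finset.sum_congr rfl
  intro R _
  rw [Preadditive.zsmul_comp, Preadditive.comp_zsmul]
  congr 1

end C2Algebra


lemma isZero_image_of_eq_zero {T T' : B} {f : T ⟶ T'} (h : f = 0) : IsZero (image f) := by
  rw [IsZero.iff_id_eq_zero, ← cancel_mono (image.ι f), image.ι_zero' h,
    Category.id_comp, comp_zero]

noncomputable def oneIso (X : A) : (⨁ (fun _ : Fin 1 => X)) ≅ X where
  hom := biproduct.π (fun _ : Fin 1 => X) 0
  inv := biproduct.ι (fun _ : Fin 1 => X) 0
  hom_inv_id := by
    have h := biproduct.total (f := fun _ : Fin 1 => X)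
    rwa [Fin.sum_univ_one] at h
  inv_hom_id := by simp

lemma c2_zero_transport (F : A ⥤ B) {U U' : A} (ρ : U ≅ U') (V : A)
    (h : c2 F U V = 0) : c2 F U' V = 0 := by
  have hnat := c2_natural F ρ.hom (𝟙 V)
  rw [h, zero_comp] at hnat
  have hiso : IsIso (biprod.map ρ.hom (𝟙 V)) := by
    refine ⟨biprod.map ρ.inv (𝟙 V), ?_, ?_⟩ <;>
    · apply biprod.hom_ext' <;> simp
  exact (cancel_epi (F.map (biprod.map ρ.hom (𝟙 V)))).1 (by rw [← hnat, comp_zero])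

section BaseHelpers
variable (F : A ⥤ B) (hF : IsZero (F.obj (0 : A)))
include hF

lemma sB_one (X' : Fin 2 → A) :
    sB F X' = c2 F (⨁ (X' ∘ Fin.castSucc)) (X' (Fin.last 1)) := by
  have hu : eS (X' ∘ Fin.castSucc) ({0} : Finset (Fin 1)) = 𝟙 _ := by
    rw [eS, Finset.sum_singleton]
    have h := biproduct.total (f := X' ∘ Fin.castSucc)
    rwa [Fin.sum_univ_one] at h
  have he : eS (X' ∘ Fin.castSucc) (∅ : Finset (Fin 1)) = 0 := by simp [eS]
  have huniv : (Finset.univ : Finset (Finset (Fin 1))) = {∅, {0}} := by decide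
  rw [sB, huniv, Finset.sum_insert (by decide), Finset.sum_singleton, he, hu]
  have h1 : biprod.map (0 : (⨁ (X' ∘ Fin.castSucc)) ⟶ (⨁ (X' ∘ Fin.castSucc)))
      (𝟙 (X' (Fin.last 1))) = qq _ _ := by
    apply biprod.hom_ext' <;> simp
  have h2 : biprod.map (0 : (⨁ (X' ∘ Fin.castSucc)) ⟶ (⨁ (X' ∘ Fin.castSucc)))
      (0 : X' (Fin.last 1) ⟶ X' (Fin.last 1)) = 0 := by
    apply biprod.hom_ext' <;> simp
  have h3 : biprod.map (𝟙 (⨁ (X' ∘ Fin.castSucc))) (𝟙 (X' (Fin.last 1))) = 𝟙 _ := by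
    apply biprod.hom_ext' <;> simp
  have h4 : biprod.map (𝟙 (⨁ (X' ∘ Fin.castSucc))) (0 : X' (Fin.last 1) ⟶ X' (Fin.last 1))
      = pp _ _ := by
    apply biprod.hom_ext' <;> simp
  rw [h1, h2, h3, h4, F.map_id, map_zero'' F hF]
  simp only [Finset.card_empty, Finset.card_singleton]
  norm_num
  rw [c2]
  simp only [← F.map_comp, pp, qq]
  abel

lemma additive_of_c2_zero (X Y : A) (h : c2 F X Y = 0) :
    IsIso (biprod.desc (F.map (biprod.inl : X ⟶ X ⊞ Y)) (F.map (biprod.inr : Y ⟶ X ⊞ Y))) := by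
  refine ⟨biprod.lift (F.map biprod.fst) (F.map biprod.snd), ?_, ?_⟩
  · apply biprod.hom_ext' <;> apply biprod.hom_ext <;>
      simp [← F.map_comp, map_zero'' F hF]
  · rw [biprod.lift_desc, ← F.map_comp, ← F.map_comp]
    have h2 := h
    rw [c2, sub_sub, sub_eq_zero] at h2
    rw [← h2]

lemma c2_zero_of_additive (X Y : A)
    (h : IsIso (biprod.desc (F.map (biprod.inl : X ⟶ X ⊞ Y)) (F.map (biprod.inr : Y ⟶ X ⊞ Y)))) :
    c2 F X Y = 0 := by
  set u := biprod.desc (F.map (biprod.inl : X ⟶ X ⊞ Y)) (F.map (biprod.inr : Y ⟶ X ⊞ Y)) with hu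
  set v := biprod.lift (F.map (biprod.fst : X ⊞ Y ⟶ X)) (F.map (biprod.snd : X ⊞ Y ⟶ Y)) with hv
  have huv : u ≫ v = 𝟙 _ := by
    rw [hu, hv]
    apply biprod.hom_ext' <;> apply biprod.hom_ext <;>
      simp [← F.map_comp, map_zero'' F hF]
  have hvu : v ≫ u = 𝟙 _ := by
    rw [← cancel_epi u, ← Category.assoc, huv, Category.id_comp, Category.comp_id]
  rw [biprod.lift_desc, ← F.map_comp, ← F.map_comp] at hvu
  rw [c2, sub_sub, sub_eq_zero, ← hvu]

end BaseHelpers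


lemma bigN_zero (F : A ⥤ B) (G : A × A ⥤ B) {n : ℕ} (hn : 1 ≤ n) (Zc : Fin n → A) (Y : A)
    (hW : (∑ R : Finset (Fin n), ((-1:ℤ)^(n - R.card)) •
        G.map ((eS Zc R, 𝟙 Y) : ((⨁ Zc, Y) : A × A) ⟶ ((⨁ Zc, Y) : A × A))) = 0) :
    (∑ R : Finset (Fin n), ((-1:ℤ)^(n - R.card)) •
      (biprod.map (F.map (eS Zc R)) (biprod.map (F.map (𝟙 Y))
          (G.map ((eS Zc R, 𝟙 Y) : ((⨁ Zc, Y) : A × A) ⟶ ((⨁ Zc, Y) : A × A))))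
        - biprod.map (F.map (eS Zc R)) (biprod.map (F.map (0 : Y ⟶ Y))
          (G.map ((eS Zc R, (0 : Y ⟶ Y)) : ((⨁ Zc, Y) : A × A) ⟶ ((⨁ Zc, Y) : A × A))))))
      = 0 := by
  have hsplit : ∀ R : Finset (Fin n),
      G.map ((eS Zc R, (0 : Y ⟶ Y)) : ((⨁ Zc, Y) : A × A) ⟶ ((⨁ Zc, Y) : A × A))
        = G.map ((eS Zc R, 𝟙 Y) : ((⨁ Zc, Y) : A × A) ⟶ ((⨁ Zc, Y) : A × A))
            ≫ G.map ((𝟙 (⨁ Zc), (0 : Y ⟶ Y)) : ((⨁ Zc, Y) : A × A) ⟶ ((⨁ Zc, Y) : A × A)) := by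
    intro R
    rw [← G.map_comp]
    congr 1
    exact Prod.ext (by simp [prod_comp]) (by simp [prod_comp])
  apply biprod.hom_ext'
  · rw [comp_zero, Preadditive.comp_sum]
    apply Finset.sum_eq_zero
    intro R _
    rw [Preadditive.comp_zsmul, Preadditive.comp_sub, biprod.inl_map, biprod.inl_map,
      sub_self, smul_zero]
  · rw [comp_zero, Preadditive.comp_sum]
    have step : ∀ R ∈ (Finset.univ : Finset (Finset (Fin n))),
        biprod.inr ≫ (((-1:ℤ)^(n - R.card)) •
          (biprod.map (F.map (eS Zc R)) (biprod.map (F.map (𝟙 Y))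
              (G.map ((eS Zc R, 𝟙 Y) : ((⨁ Zc, Y) : A × A) ⟶ ((⨁ Zc, Y) : A × A))))
            - biprod.map (F.map (eS Zc R)) (biprod.map (F.map (0 : Y ⟶ Y))
              (G.map ((eS Zc R, (0 : Y ⟶ Y)) : ((⨁ Zc, Y) : A × A) ⟶ ((⨁ Zc, Y) : A × A))))))
        = (((-1:ℤ)^(n - R.card)) •
            (biprod.map (F.map (𝟙 Y)) (G.map ((eS Zc R, 𝟙 Y) : ((⨁ Zc, Y) : A × A) ⟶ ((⨁ Zc, Y) : A × A)))
              - biprod.map (F.map (0 : Y ⟶ Y))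
                  (G.map ((eS Zc R, (0 : Y ⟶ Y)) : ((⨁ Zc, Y) : A × A) ⟶ ((⨁ Zc, Y) : A × A))))) ≫ biprod.inr := by
      intro R _
      rw [Preadditive.comp_zsmul, Preadditive.comp_sub, biprod.inr_map, biprod.inr_map,
        ← Preadditive.sub_comp, ← Preadditive.zsmul_comp]
    rw [Finset.sum_congr rfl step, ← Preadditive.sum_comp]
    suffices h2 : (∑ R : Finset (Fin n), ((-1:ℤ)^(n - R.card)) •
        (biprod.map (F.map (𝟙 Y)) (G.map ((eS Zc R, 𝟙 Y) : ((⨁ Zc, Y) : A × A) ⟶ ((⨁ Zc, Y) : A × A)))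
          - biprod.map (F.map (0 : Y ⟶ Y))
              (G.map ((eS Zc R, (0 : Y ⟶ Y)) : ((⨁ Zc, Y) : A × A) ⟶ ((⨁ Zc, Y) : A × A))))) = 0 by
      rw [h2, zero_comp]
    apply biprod.hom_ext'
    · rw [comp_zero, Preadditive.comp_sum]
      have step2 : ∀ R ∈ (Finset.univ : Finset (Finset (Fin n))),
          biprod.inl ≫ (((-1:ℤ)^(n - R.card)) •
            (biprod.map (F.map (𝟙 Y)) (G.map ((eS Zc R, 𝟙 Y) : ((⨁ Zc, Y) : A × A) ⟶ ((⨁ Zc, Y) : A × A)))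
              - biprod.map (F.map (0 : Y ⟶ Y))
                  (G.map ((eS Zc R, (0 : Y ⟶ Y)) : ((⨁ Zc, Y) : A × A) ⟶ ((⨁ Zc, Y) : A × A)))))
          = ((-1:ℤ)^(n - R.card)) •
              ((𝟙 (F.obj Y) - F.map (0 : Y ⟶ Y)) ≫ biprod.inl) := by
        intro R _
        rw [Preadditive.comp_zsmul, Preadditive.comp_sub, biprod.inl_map, biprod.inl_map,
          F.map_id, ← Preadditive.sub_comp]
      rw [Finset.sum_congr rfl step2, ← Finset.sum_smul, sign_sum_zero n hn, zero_smul]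
    · rw [comp_zero, Preadditive.comp_sum]
      have step3 : ∀ R ∈ (Finset.univ : Finset (Finset (Fin n))),
          biprod.inr ≫ (((-1:ℤ)^(n - R.card)) •
            (biprod.map (F.map (𝟙 Y)) (G.map ((eS Zc R, 𝟙 Y) : ((⨁ Zc, Y) : A × A) ⟶ ((⨁ Zc, Y) : A × A)))
              - biprod.map (F.map (0 : Y ⟶ Y))
                  (G.map ((eS Zc R, (0 : Y ⟶ Y)) : ((⨁ Zc, Y) : A × A) ⟶ ((⨁ Zc, Y) : A × A)))))
          = (((-1:ℤ)^(n - R.card)) •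
              G.map ((eS Zc R, 𝟙 Y) : ((⨁ Zc, Y) : A × A) ⟶ ((⨁ Zc, Y) : A × A))) ≫
            (biprod.inr - G.map ((𝟙 (⨁ Zc), (0 : Y ⟶ Y)) : ((⨁ Zc, Y) : A × A) ⟶ ((⨁ Zc, Y) : A × A))
                ≫ biprod.inr) := by
        intro R _
        rw [Preadditive.comp_zsmul, Preadditive.comp_sub, biprod.inr_map, biprod.inr_map,
          hsplit R, Category.assoc, ← Preadditive.comp_sub, ← Preadditive.zsmul_comp]
      rw [Finset.sum_congr rfl step3, ← Preadditive.sum_comp, hW, zero_comp]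

lemma degLE_of_vanish : ∀ (d : ℕ) (F : A ⥤ B), IsZero (F.obj (0 : A)) →
    (∀ X : Fin (d + 2) → A, crIdem F X = 0) → FunctorDegLE (d + 1) F := by
  intro d
  induction d with
  | zero =>
    intro F hF hvan X Y
    apply additive_of_c2_zero F hF
    have hvs := sB_one F hF (Fin.snoc (fun _ : Fin 1 => X) Y)
    have hzero : sB F (Fin.snoc (fun _ : Fin 1 => X) Y) = 0 := by
      rw [sB_eq, hvan _, zero_comp, comp_zero]
    rw [hzero] at hvs
    have h1 : (Fin.snoc (fun _ : Fin 1 => X) Y : Fin 2 → A) ∘ Fin.castSucc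
        = (fun _ : Fin 1 => X) := by
      funext i; simp
    have h2 : (Fin.snoc (fun _ : Fin 1 => X) Y : Fin 2 → A) (Fin.last 1) = Y := Fin.snoc_last (α := fun _ => A) _ _
    rw [h1, h2] at hvs
    exact c2_zero_transport F (oneIso X) Y hvs.symm
  | succ d ih =>
    intro F hF hvan
    refine ⟨Gfun F hF, ⟨fun X Y => decompIso F hF X Y,
      fun X X' Y Y' f g => decomp_natural F hF f g⟩, ?_, ?_⟩
    · intro U
      apply ih
      · exact isZero_image_of_eq_zero (c2_X0 F hF U)
      · intro Z
        rw [crIdem_curryG F hF]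
        apply sandwich_zero (c2_idem F hF U (⨁ Z))
        have hvs := c2_D2_eq_cB F hF (Fin.cons U Z) (by omega)
        have hzero : cB F (Fin.cons U Z) = 0 := by
          rw [cB_eq, hvan (Fin.cons U Z), zero_comp, comp_zero]
        rw [hzero] at hvs
        have h1 : (Fin.cons U Z : Fin (d+3) → A) ∘ Fin.succ = Z := by funext i; simp
        have h2 : (Fin.cons U Z : Fin (d+3) → A) 0 = U := by simp
        rw [h1, h2] at hvs
        exact hvs
    · intro V
      apply ih
      · exact isZero_image_of_eq_zero (c2_0Y F hF V)
      · intro Z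
        rw [crIdem_curryGswap F hF]
        apply sandwich_zero (c2_idem F hF (⨁ Z) V)
        have hvs := c2_D1_eq_sB F hF (Fin.snoc Z V) (by omega)
        have hzero : sB F (Fin.snoc Z V) = 0 := by
          rw [sB_eq, hvan (Fin.snoc Z V), zero_comp, comp_zero]
        rw [hzero] at hvs
        have h1 : (Fin.snoc Z V : Fin (d+3) → A) ∘ Fin.castSucc = Z := by funext i; simp
        have h2 : (Fin.snoc Z V : Fin (d+3) → A) (Fin.last (d+2)) = V := by simp
        rw [h1, h2] at hvs
        exact hvs

lemma vanish_of_degLE : ∀ (d : ℕ) (F : A ⥤ B), FunctorDegLE (d + 1) F →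
    ∀ X' : Fin (d + 2) → A, crIdem F X' = 0 := by
  intro d
  induction d with
  | zero =>
    intro F hdeg X'
    have hF : IsZero (F.obj (0 : A)) := by
      haveI hiso := hdeg (0 : A) (0 : A)
      have he : (biprod.inl : (0:A) ⟶ 0 ⊞ 0) = biprod.inr :=
        (isZero_zero A).eq_of_src _ _
      have h12 : (biprod.inl : F.obj (0:A) ⟶ F.obj (0:A) ⊞ F.obj (0:A)) = biprod.inr := by
        apply (cancel_mono (biprod.desc (F.map (biprod.inl : (0:A) ⟶ 0 ⊞ 0))
          (F.map (biprod.inr : (0:A) ⟶ 0 ⊞ 0)))).1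
        rw [biprod.inl_desc, biprod.inr_desc, he]
      rw [IsZero.iff_id_eq_zero]
      calc 𝟙 (F.obj (0:A))
          = (biprod.inl : F.obj (0:A) ⟶ F.obj (0:A) ⊞ F.obj (0:A)) ≫ biprod.fst := by
            rw [biprod.inl_fst]
        _ = (biprod.inr : F.obj (0:A) ⟶ F.obj (0:A) ⊞ F.obj (0:A)) ≫ biprod.fst := by
            rw [h12]
        _ = 0 := biprod.inr_fst
    rw [crIdem_snoc, sB_one F hF X',
      c2_zero_of_additive F hF _ _ (hdeg (⨁ (X' ∘ Fin.castSucc)) (X' (Fin.last 1))),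
      zero_comp, comp_zero]
  | succ d ih =>
    intro F hdeg X'
    obtain ⟨G, ⟨iso, hnat⟩, hG1, hG2⟩ := hdeg
    rw [crIdem_snoc]
    suffices hsB : sB F X' = 0 by rw [hsB, zero_comp, comp_zero]
    have hmap : ∀ (f : (⨁ (X' ∘ Fin.castSucc)) ⟶ (⨁ (X' ∘ Fin.castSucc)))
        (g : X' (Fin.last (d+2)) ⟶ X' (Fin.last (d+2))),
        F.map (biprod.map f g)
          = (iso (⨁ (X' ∘ Fin.castSucc)) (X' (Fin.last (d+2)))).hom ≫
              biprod.map (F.map f) (biprod.map (F.map g) (G.map ((f, g) : _ ⟶ _))) ≫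
              (iso (⨁ (X' ∘ Fin.castSucc)) (X' (Fin.last (d+2)))).inv := by
      intro f g
      have h := hnat _ _ _ _ f g
      rw [← Category.assoc, h, Category.assoc, Iso.hom_inv_id, Category.comp_id]
    have per : ∀ R : Finset (Fin (d+2)),
        ((-1:ℤ)^((d+2) - R.card)) •
          (F.map (biprod.map (eS (X' ∘ Fin.castSucc) R) (𝟙 (X' (Fin.last (d+2)))))
            - F.map (biprod.map (eS (X' ∘ Fin.castSucc) R) (0 : X' (Fin.last (d+2)) ⟶ _)))
        = (iso (⨁ (X' ∘ Fin.castSucc)) (X' (Fin.last (d+2)))).hom ≫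
            ((((-1:ℤ)^((d+2) - R.card)) •
              (biprod.map (F.map (eS (X' ∘ Fin.castSucc) R))
                (biprod.map (F.map (𝟙 (X' (Fin.last (d+2)))))
                  (G.map ((eS (X' ∘ Fin.castSucc) R, 𝟙 (X' (Fin.last (d+2)))) : _ ⟶ _)))
                - biprod.map (F.map (eS (X' ∘ Fin.castSucc) R))
                  (biprod.map (F.map (0 : X' (Fin.last (d+2)) ⟶ _))
                    (G.map ((eS (X' ∘ Fin.castSucc) R, (0 : X' (Fin.last (d+2)) ⟶ _)) : _ ⟶ _)))))
              ≫ (iso (⨁ (X' ∘ Fin.castSucc)) (X' (Fin.last (d+2)))).inv) := by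
      intro R
      rw [hmap, hmap, ← Preadditive.comp_sub, ← Preadditive.sub_comp,
        ← Preadditive.comp_zsmul, ← Preadditive.zsmul_comp]
    rw [sB, Finset.sum_congr rfl (fun R _ => per R), ← Preadditive.comp_sum,
      ← Preadditive.sum_comp]
    have hW : (∑ R : Finset (Fin (d+2)), ((-1:ℤ)^((d+2) - R.card)) •
        G.map ((eS (X' ∘ Fin.castSucc) R, 𝟙 (X' (Fin.last (d+2)))) :
          ((⨁ (X' ∘ Fin.castSucc), X' (Fin.last (d+2))) : A × A) ⟶
            ((⨁ (X' ∘ Fin.castSucc), X' (Fin.last (d+2))) : A × A))) = 0 :=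
      ih ((Functor.curry.obj (CategoryTheory.Prod.swap A A ⋙ G)).obj (X' (Fin.last (d+2))))
        (hG2 (X' (Fin.last (d+2)))) (X' ∘ Fin.castSucc)
    rw [bigN_zero F G (by omega) (X' ∘ Fin.castSucc) (X' (Fin.last (d+2))) hW,
      zero_comp, comp_zero]

end CrossFx

/-- for `d ≥ 1`, the `(d+1)`-st cross effect of `F` vanishes if and only if
`F` is of degree `≤ d` in the recursive sense: either `d = 1` and `F` is additive, or
`d > 1` and there is a functor `G` of degree `≤ d − 1` in each argument with a natural
decomposition `F(X ⊕ Y) ≅ F(X) ⊕ F(Y) ⊕ G(X,Y)`. -/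
theorem cross_effect_vanishing_iff_degree_le
    (F : A ⥤ B) (hF : IsZero (F.obj (0 : A))) (d : ℕ) (hd : 1 ≤ d) :
    (∀ X : Fin (d + 1) → A, IsZero (crossEffect F X)) ↔ FunctorDegLE d F := by
  obtain ⟨d', rfl⟩ : ∃ d', d = d' + 1 := ⟨d - 1, by omega⟩
  constructor
  · intro h
    exact CrossFx.degLE_of_vanish d' F hF
      (fun X => (CrossFx.isZero_crossEffect_iff F X).1 (h X))
  · intro h X
    exact (CrossFx.isZero_crossEffect_iff F X).2 (CrossFx.vanish_of_degLE d' F h X)
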